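/- arXiv:1701.02844 — 5 statements merged into one kernel-verified Lean document; each statement's English description precedes it below -/
import Mathlib

section
/- Let G = (V,E) be a finite connected edge-weighted graph, let M be a minimum spanning tree of G, and let w ∈ ℝ. Then for all u, v ∈ V, u and v lie in the same connected component of the threshold subgraph M_{≤w} (the subgraph of M consisting of its edges of weight ≤ w) if and only if u and v lie in the same connected component of the threshold subgraph G_{≤w}. -/
open SimpleGraph

/-- The threshold subgraph `G_{≤ t}`: same vertices, only edges of weight `≤ t`. -/
def thresholdGraph {V : Type*} (G : SimpleGraph V) (w : Sym2 V → ℝ) (t : ℝ) :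
    SimpleGraph V where
  Adj u v := G.Adj u v ∧ w s(u, v) ≤ t
  symm := by
    constructor
    intro u v hv
    exact ⟨hv.1.symm, by rw [Sym2.eq_swap]; exact hv.2⟩
  loopless := ⟨fun v hv => G.irrefl hv.1⟩

/-- The strict threshold subgraph `G_{< t}`. -/
def strictThresholdGraph {V : Type*} (G : SimpleGraph V) (w : Sym2 V → ℝ) (t : ℝ) :
    SimpleGraph V where
  Adj u v := G.Adj u v ∧ w s(u, v) < t
  symm := by
    constructor
    intro u v hv
    exact ⟨hv.1.symm, by rw [Sym2.eq_swap]; exact hv.2⟩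
  loopless := ⟨fun v hv => G.irrefl hv.1⟩

/-- The laminar family of an edge-weighted graph: the whole vertex set together with the
vertex sets of the connected components of every threshold subgraph. -/
def laminarFamily {V : Type*} (G : SimpleGraph V) (w : Sym2 V → ℝ) : Set (Set V) :=
  insert Set.univ
    {S | ∃ (t : ℝ) (C : (thresholdGraph G w t).ConnectedComponent), S = C.supp}

/-- `M` is a spanning tree of `G`. -/
def IsSpanningTree {V : Type*} (G M : SimpleGraph V) : Prop :=
  M ≤ G ∧ M.IsTree

/-- Total weight of (the edges of) a graph. -/
noncomputable def totalWeight {V : Type*} [Finite V] (M : SimpleGraph V)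
    (w : Sym2 V → ℝ) : ℝ :=
  ∑ e ∈ M.edgeSet.toFinite.toFinset, w e

/-- `M` is a minimum spanning tree of `G` with respect to the weights `w`. -/
def IsMST {V : Type*} [Finite V] (G : SimpleGraph V) (w : Sym2 V → ℝ)
    (M : SimpleGraph V) : Prop :=
  IsSpanningTree G M ∧ ∀ M' : SimpleGraph V, IsSpanningTree G M' →
    totalWeight M w ≤ totalWeight M' w

/-- A phylogenetic tree: a finite tree with strictly positive edge lengths and a nonempty
set `L` of labeled vertices, each hidden vertex having degree at least 3. -/
structure PhyloTree (V : Type*) where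
  finV : Finite V
  T : SimpleGraph V
  isTree : T.IsTree
  len : Sym2 V → ℝ
  len_pos : ∀ e ∈ T.edgeSet, 0 < len e
  L : Set V
  L_nonempty : L.Nonempty
  hidden_deg : ∀ v, v ∉ L → 3 ≤ (T.neighborSet v).ncard

namespace PhyloTree

variable {V : Type*}

/-- The unique path between two vertices of the tree. -/
noncomputable def path (P : PhyloTree V) (u v : V) : P.T.Walk u v :=
  (P.isTree.existsUnique_path u v).exists.choose

lemma path_isPath (P : PhyloTree V) (u v : V) : (P.path u v).IsPath :=
  (P.isTree.existsUnique_path u v).exists.choose_spec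

/-- The tree distance: the sum of the edge lengths along the unique path. -/
noncomputable def dist (P : PhyloTree V) (u v : V) : ℝ :=
  ((P.path u v).edges.map P.len).sum

lemma dist_comm (P : PhyloTree V) (u v : V) : P.dist u v = P.dist v u := by
  have h : (P.path u v).reverse = P.path v u :=
    (P.isTree.existsUnique_path v u).unique ((P.path_isPath u v).reverse)
      (P.path_isPath v u)
  unfold dist
  rw [← h, SimpleGraph.Walk.edges_reverse, List.map_reverse, List.sum_reverse]

/-- The tree distance as a symmetric function on unordered pairs. -/
noncomputable def wdist (P : PhyloTree V) : Sym2 V → ℝ :=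
  Sym2.lift ⟨fun u v => P.dist u v, fun u v => P.dist_comm u v⟩

/-- The surrogate set of a vertex: the labeled vertices closest to it. -/
def Sg (P : PhyloTree V) (h : V) : Set V :=
  {l | l ∈ P.L ∧ ∀ l' ∈ P.L, P.dist l h ≤ P.dist l' h}

/-- `s` is the surrogate vertex `Sg_R(h)` of `h` w.r.t. the ranking `R`:
the element of the surrogate set of `h` of smallest `R`-value. -/
def IsSgR (P : PhyloTree V) (R : V → ℕ) (h : V) (s : V) : Prop :=
  s ∈ P.Sg h ∧ ∀ l ∈ P.Sg h, R s ≤ R l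

/-- The edge weights of the distance graph of `P` (the complete graph on `↥P.L`). -/
noncomputable def wG (P : PhyloTree V) : Sym2 ↥P.L → ℝ :=
  fun e => P.wdist (e.map Subtype.val)

/-- An edge `e` of the distance graph lying in at least one MST (i.e. an edge of `g`). -/
def mstEdge (P : PhyloTree V) (e : Sym2 ↥P.L) : Prop :=
  haveI := P.finV
  ∃ M : SimpleGraph ↥P.L, IsMST (⊤ : SimpleGraph ↥P.L) P.wG M ∧ e ∈ M.edgeSet

/-- `δ_max(v)`: the maximum degree of `v` over all MSTs of the distance graph. -/
noncomputable def deltaMax (P : PhyloTree V) (v : ↥P.L) : ℕ :=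
  haveI := P.finV
  sSup {d : ℕ | ∃ M : SimpleGraph ↥P.L,
    IsMST (⊤ : SimpleGraph ↥P.L) P.wG M ∧ d = (M.neighborSet v).ncard}

end PhyloTree

/-- The smaller of the two ranks of the endpoints of an edge. -/
def sym2MinR {α : Type*} (R : α → ℕ) : Sym2 α → ℕ :=
  Sym2.lift ⟨fun a b => min (R a) (R b), fun a b => min_comm _ _⟩

/-- The larger of the two ranks of the endpoints of an edge. -/
def sym2MaxR {α : Type*} (R : α → ℕ) : Sym2 α → ℕ :=
  Sym2.lift ⟨fun a b => max (R a) (R b), fun a b => max_comm _ _⟩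

/-- The strict total order `<_R` on edges: first by weight, then by the smaller rank of
the endpoints, then by the larger rank of the endpoints. -/
def edgeLT {α : Type*} (w : Sym2 α → ℝ) (R : α → ℕ) (e f : Sym2 α) : Prop :=
  w e < w f ∨ (w e = w f ∧ (sym2MinR R e < sym2MinR R f ∨
    (sym2MinR R e = sym2MinR R f ∧ sym2MaxR R e < sym2MaxR R f)))

/-- `M` is the vertex-ranked MST of `G` w.r.t. the ranking `R`: a spanning tree such that
every non-tree edge `{u,v}` of `G` is the `<_R`-greatest edge of the cycle it closes,
i.e. every edge of the `M`-path from `u` to `v` is `<_R`-smaller than `{u,v}`. -/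
def IsVRMST {α : Type*} (G : SimpleGraph α) (w : Sym2 α → ℝ) (R : α → ℕ)
    (M : SimpleGraph α) : Prop :=
  IsSpanningTree G M ∧ ∀ u v : α, G.Adj u v → ¬M.Adj u v →
    ∀ p : M.Walk u v, p.IsPath → ∀ f ∈ p.edges, edgeLT w R f s(u, v)

section Helpers
variable {V : Type*}

lemma reachable_of_forall_adj' {G K : SimpleGraph V}
    (h : ∀ u v, G.Adj u v → K.Reachable u v) {u v : V} (p : G.Walk u v) :
    K.Reachable u v := by
  induction p with
  | nil => exact Reachable.refl _
  | cons a p ih => exact (h _ _ a).trans ih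

lemma walk_split' {G : SimpleGraph V} {a b : V} (p : G.Walk a b) (hp : p.IsTrail)
    (e : Sym2 V) (he : e ∈ p.edges) :
    ∃ x y, e = s(x, y) ∧ (G.deleteEdges {e}).Reachable a x ∧
      (G.deleteEdges {e}).Reachable y b := by
  induction p with
  | nil => simp at he
  | @cons u c b h q ih =>
    rw [Walk.edges_cons, List.mem_cons] at he
    rw [Walk.isTrail_cons] at hp
    rcases he with rfl | he'
    · refine ⟨u, c, rfl, Reachable.refl _, ?_⟩
      refine ⟨q.toDeleteEdges _ fun f hf => ?_⟩
      simp only [Set.mem_singleton_iff]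
      rintro rfl
      exact hp.2 hf
    · obtain ⟨x, y, rfl, h1, h2⟩ := ih hp.1 he'
      have hne : s(u, c) ≠ s(x, y) := fun hh => hp.2 (hh ▸ he')
      have hadj : (G.deleteEdges {s(x, y)}).Adj u c := by
        rw [deleteEdges_adj]
        exact ⟨h, by simpa using hne⟩
      exact ⟨x, y, rfl, hadj.reachable.trans h1, h2⟩

lemma mst_path_edge_weight_le [Finite V] {G : SimpleGraph V} {w : Sym2 V → ℝ}
    {M : SimpleGraph V} (hM : IsMST G w M) {a b : V} (hab : G.Adj a b)
    {p : M.Walk a b} (hp : p.IsPath) {e : Sym2 V} (he : e ∈ p.edges) :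
    w e ≤ w s(a, b) := by
  classical
  by_contra hlt
  push_neg at hlt
  obtain ⟨⟨hMG, htree⟩, hmin⟩ := hM
  have hmem : e ∈ M.edgeSet := p.edges_subset_edgeSet he
  have hne : e ≠ s(a, b) := fun h => by rw [h] at hlt; exact lt_irrefl _ hlt
  have hab' : a ≠ b := hab.ne
  -- s(a,b) is not an edge of M
  have hnab : s(a, b) ∉ M.edgeSet := by
    intro hmem'
    have hadj : M.Adj a b := hmem'
    have hun := htree.IsAcyclic.path_unique ⟨p, hp⟩ (Path.singleton hadj)
    apply hne
    have : e ∈ (Path.singleton hadj : M.Walk a b).edges := by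
      rw [← congrArg Subtype.val hun]; exact he
    simpa [Path.singleton] using this
  set M' := M.deleteEdges {e} ⊔ fromEdgeSet {s(a, b)} with hM'def
  have hedge : M'.edgeSet = (M.edgeSet \ {e}) ∪ {s(a, b)} := by
    rw [hM'def, edgeSet_sup, edgeSet_deleteEdges, edgeSet_fromEdgeSet]
    congr 1
    ext f
    simp only [Set.mem_diff, Set.mem_singleton_iff, Set.mem_setOf_eq]
    constructor
    · rintro ⟨rfl, _⟩; rfl
    · rintro rfl; exact ⟨rfl, by simp [hab']⟩
  have hM'G : M' ≤ G := by
    refine sup_le ((deleteEdges_le _).trans hMG) ?_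
    intro u v huv
    rw [fromEdgeSet_adj] at huv
    obtain ⟨h1, h2⟩ := huv
    rw [Set.mem_singleton_iff, Sym2.eq_iff] at h1
    rcases h1 with ⟨rfl, rfl⟩ | ⟨rfl, rfl⟩
    · exact hab
    · exact hab.symm
  -- a and b are not reachable after deleting e from M
  have hnreach : ¬(M.deleteEdges {e}).Reachable a b := by
    rintro ⟨q⟩
    have hq : ∀ f ∈ q.edges, f ∈ M.edgeSet := fun f hf =>
      ((edgeSet_deleteEdges ({e} : Set (Sym2 V)) (G := M)) ▸ q.edges_subset_edgeSet hf).1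
    have hq2 : e ∉ (q.transfer M hq).edges := by
      rw [Walk.edges_transfer]
      intro hcon
      exact ((edgeSet_deleteEdges ({e} : Set (Sym2 V)) (G := M)) ▸
        q.edges_subset_edgeSet hcon).2 rfl
    have hun := htree.IsAcyclic.path_unique ⟨p, hp⟩ (q.transfer M hq).toPath
    apply hq2
    apply Walk.edges_toPath_subset
    rw [← congrArg Subtype.val hun]
    exact he
  -- M' is connected
  have hM'le : M.deleteEdges {e} ≤ M' := le_sup_left
  have hadjab : M'.Adj a b := by
    rw [hM'def, sup_adj, fromEdgeSet_adj]
    exact Or.inr ⟨rfl, hab'⟩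
  have hconn : M'.Connected := by
    have hpre : ∀ u v, M.Adj u v → M'.Reachable u v := by
      intro u v huv
      by_cases hc : s(u, v) = e
      · obtain ⟨x, y, hxy, h1, h2⟩ := walk_split' p hp.isTrail e he
        have hxyr : M'.Reachable x y :=
          ((h1.mono hM'le).symm.trans hadjab.reachable).trans (h2.mono hM'le).symm
        rw [hxy, Sym2.eq_iff] at hc
        rcases hc with ⟨rfl, rfl⟩ | ⟨rfl, rfl⟩
        · exact hxyr
        · exact hxyr.symm
      · refine Adj.reachable ?_
        rw [hM'def, sup_adj, deleteEdges_adj]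
        exact Or.inl ⟨huv, by simpa using hc⟩
    rw [connected_iff]
    refine ⟨fun u v => ?_, htree.isConnected.nonempty⟩
    obtain ⟨r⟩ := htree.isConnected.preconnected u v
    exact reachable_of_forall_adj' hpre r
  -- M' is acyclic
  have hacy : M'.IsAcyclic := by
    intro v c hc
    by_cases hab_in : s(a, b) ∈ c.edges
    · have hkey := (adj_and_reachable_delete_edges_iff_exists_cycle
        (G := M') (v := a) (w := b)).mpr ⟨v, c, hc, hab_in⟩
      apply hnreach
      refine hkey.2.mono ?_
      intro u u' huu
      rw [deleteEdges_adj] at huu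
      obtain ⟨h1, h2⟩ := huu
      rw [hM'def, sup_adj] at h1
      rcases h1 with h1 | h1
      · exact h1
      · exact absurd h1.1 h2
    · have hsub : ∀ f ∈ c.edges, f ∈ M.edgeSet := by
        intro f hf
        have hf2 := c.edges_subset_edgeSet hf
        rw [hedge] at hf2
        rcases hf2 with ⟨hf3, _⟩ | hf3
        · exact hf3
        · exact absurd (hf3 ▸ hf) hab_in
      exact htree.IsAcyclic (c.transfer M hsub) (hc.transfer hsub)
  -- weight comparison
  have hspan : IsSpanningTree G M' := ⟨hM'G, ⟨hconn, hacy⟩⟩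
  have hle := hmin M' hspan
  have heq : M'.edgeSet.toFinite.toFinset
      = insert s(a, b) ((M.edgeSet.toFinite.toFinset).erase e) := by
    ext f
    simp only [Set.Finite.mem_toFinset, hedge, Set.mem_union, Set.mem_diff,
      Set.mem_singleton_iff, Finset.mem_insert, Finset.mem_erase]
    tauto
  have hnotin : s(a, b) ∉ (M.edgeSet.toFinite.toFinset).erase e := by
    simp only [Finset.mem_erase, Set.Finite.mem_toFinset]
    tauto
  have hein : e ∈ M.edgeSet.toFinite.toFinset := by
    rwa [Set.Finite.mem_toFinset]
  have hw' : totalWeight M' w = w s(a, b) + (totalWeight M w - w e) := by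
    rw [totalWeight, heq, Finset.sum_insert hnotin, Finset.sum_erase_eq_sub hein]
    rfl
  rw [hw'] at hle
  linarith

end Helpers

/-- an MST has the same threshold-connectivity as the original graph. -/



theorem mst_threshold_reachable_iff {V : Type*} [Finite V] (G : SimpleGraph V)
    (w : Sym2 V → ℝ) (hG : G.Connected) (M : SimpleGraph V) (hM : IsMST G w M)
    (t : ℝ) :
    ∀ u v : V, (thresholdGraph M w t).Reachable u v ↔
      (thresholdGraph G w t).Reachable u v := by
  have hMG : M ≤ G := hM.1.1
  have htree : M.IsTree := hM.1.2
  intro u v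
  constructor
  · intro h
    have hle : thresholdGraph M w t ≤ thresholdGraph G w t :=
      fun x y hxy => by
        change M.Adj x y ∧ w s(x, y) ≤ t at hxy; exact ⟨hMG hxy.1, hxy.2⟩
    exact h.mono hle
  · intro h
    classical
    obtain ⟨r⟩ := h
    refine reachable_of_forall_adj' (fun x y hxy => ?_) r
    change G.Adj x y ∧ w s(x, y) ≤ t at hxy
    obtain ⟨hadj, hwle⟩ := hxy
    obtain ⟨q⟩ := htree.isConnected.preconnected x y
    refine ⟨(q.toPath : M.Walk x y).transfer (thresholdGraph M w t) fun f hf => ?_⟩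
    have h1 : w f ≤ w s(x, y) :=
      mst_path_edge_weight_le hM hadj q.toPath.isPath hf
    have h2 : f ∈ M.edgeSet := Walk.edges_subset_edgeSet _ hf
    induction f with
    | h fx fy => exact (⟨h2, le_trans h1 hwle⟩ : M.Adj fx fy ∧ w s(fx, fy) ≤ t)
end

section
/- Let T be a phylogenetic tree with labeled vertex set L, let G be its distance graph, let R : L → ℕ be an injective ranking, and let M be the vertex-ranked MST of G with respect to R. If {i,j} ∈ E_T and Sg_R(i) ≠ Sg_R(j), then {Sg_R(i), Sg_R(j)} is an edge of M. -/
open SimpleGraph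

section Helpers

namespace PhyloTree

variable {V : Type*}

lemma path_eq (P : PhyloTree V) {u v : V} (q : P.T.Walk u v) (hq : q.IsPath) :
    P.path u v = q :=
  (P.isTree.existsUnique_path u v).unique (P.path_isPath u v) hq

lemma dist_eq_of_isPath (P : PhyloTree V) {u v : V} (q : P.T.Walk u v) (hq : q.IsPath) :
    P.dist u v = (q.edges.map P.len).sum := by
  rw [dist, P.path_eq q hq]

lemma dist_adj' (P : PhyloTree V) {u v : V} (h : P.T.Adj u v) :
    P.dist u v = P.len s(u, v) := by
  rw [P.dist_eq_of_isPath (SimpleGraph.Walk.cons h SimpleGraph.Walk.nil)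
    (by simp [SimpleGraph.Walk.cons_isPath_iff, h.ne])]
  simp

lemma dist_le_walk_sum (P : PhyloTree V) {u v : V} (q : P.T.Walk u v) :
    P.dist u v ≤ (q.edges.map P.len).sum := by
  classical
  rw [P.dist_eq_of_isPath q.bypass q.bypass_isPath]
  have hsub : q.bypass.edges ⊆ q.edges := q.edges_bypass_subset
  have hnd : q.bypass.edges.Nodup := q.bypass_isPath.isTrail.edges_nodup
  obtain ⟨l, hl, hs⟩ := hnd.subperm hsub
  have h1 : (q.bypass.edges.map P.len).sum = (l.map P.len).sum :=
    ((hl.map P.len).sum_eq).symm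
  rw [h1]
  refine (hs.map P.len).sum_le_sum ?_
  intro a ha
  obtain ⟨e, he, rfl⟩ := List.mem_map.1 ha
  exact (P.len_pos e (q.edges_subset_edgeSet he)).le

lemma dist_split (P : PhyloTree V) {u v x : V} (hx : x ∈ (P.path u v).support) :
    P.dist u v = P.dist u x + P.dist x v := by
  classical
  have hpath := P.path_isPath u v
  have key : P.path u v =
      ((P.path u v).takeUntil x hx).append ((P.path u v).dropUntil x hx) :=
    ((P.path u v).take_spec hx).symm
  have h1 := P.dist_eq_of_isPath _ (hpath.takeUntil hx)
  have h2 := P.dist_eq_of_isPath _ (hpath.dropUntil hx)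
  rw [dist]
  conv_lhs => rw [key]
  rw [SimpleGraph.Walk.edges_append, List.map_append, List.sum_append, ← h1, ← h2]

lemma dist_dichotomy (P : PhyloTree V) {i j : V} (hij : P.T.Adj i j) (v : V) :
    P.dist v i = P.dist v j + P.len s(i, j) ∨
      P.dist v j = P.dist v i + P.len s(i, j) := by
  classical
  by_cases hj : j ∈ (P.path v i).support
  · left
    rw [P.dist_split hj, P.dist_comm j i, P.dist_adj' hij]
  · right
    have hpath : ((P.path v i).concat hij).IsPath := by
      rw [← SimpleGraph.Walk.isPath_reverse_iff, SimpleGraph.Walk.reverse_concat]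
      exact (P.path_isPath v i).reverse.cons (by simpa using hj)
    rw [P.dist_eq_of_isPath _ hpath, (P.path v i).edges_concat hij,
      List.concat_eq_append, List.map_append, List.sum_append,
      ← P.dist_eq_of_isPath _ (P.path_isPath v i)]
    simp

lemma dist_cross (P : PhyloTree V) {i j a b : V} (hij : P.T.Adj i j)
    (ha : P.dist a j = P.dist a i + P.len s(i, j))
    (hb : P.dist b i = P.dist b j + P.len s(i, j)) :
    P.dist a b = P.dist a i + P.len s(i, j) + P.dist j b := by
  classical
  have hpos : 0 < P.len s(i, j) := P.len_pos _ ((P.T.mem_edgeSet).2 hij)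
  have hja : j ∉ (P.path a i).support := by
    intro h
    have h1 := P.dist_split h
    rw [P.dist_comm j i, P.dist_adj' hij] at h1
    linarith
  have hib : i ∉ (P.path b j).support := by
    intro h
    have h1 := P.dist_split h
    rw [P.dist_adj' hij] at h1
    linarith
  have hbridge : P.T.IsBridge s(i, j) :=
    (SimpleGraph.isAcyclic_iff_forall_adj_isBridge.1 P.isTree.IsAcyclic) hij
  have hmem : s(i, j) ∈ (P.path a b).edges := by
    by_contra hnot
    apply SimpleGraph.isBridge_iff.1 hbridge
    rw [SimpleGraph.reachable_delete_edges_iff_exists_walk]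
    refine ⟨(P.path a i).reverse.append ((P.path a b).append (P.path b j)), ?_⟩
    simp only [SimpleGraph.Walk.edges_append, SimpleGraph.Walk.edges_reverse,
      List.mem_append, List.mem_reverse]
    rintro (h | h | h)
    · exact hja ((P.path a i).snd_mem_support_of_mem_edges h)
    · exact hnot h
    · exact hib ((P.path b j).fst_mem_support_of_mem_edges h)
  have hi : i ∈ (P.path a b).support :=
    (P.path a b).fst_mem_support_of_mem_edges hmem
  have h1 := P.dist_split hi
  have h2 : P.dist i b = P.len s(i, j) + P.dist j b := by
    rw [P.dist_comm i b, hb, P.dist_comm b j]; ring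
  linarith

end PhyloTree

lemma exists_cross_edge {α : Type*} {G : SimpleGraph α} (Q : α → Prop) :
    ∀ {u v : α} (q : G.Walk u v), Q u → ¬ Q v →
      ∃ a b, s(a, b) ∈ q.edges ∧ Q a ∧ ¬ Q b := by
  intro u v q
  induction q with
  | nil => intro h h'; exact absurd h h'
  | @cons u x v h p ih =>
    intro hu hv
    by_cases hx : Q x
    · obtain ⟨a, b, hm, ha, hb⟩ := ih hx hv
      exact ⟨a, b, by simp [SimpleGraph.Walk.edges_cons, hm], ha, hb⟩
    · exact ⟨u, x, by simp [SimpleGraph.Walk.edges_cons], hu, hx⟩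

end Helpers

/-- distinct surrogates of adjacent tree vertices are adjacent in the
vertex-ranked MST of the distance graph. -/
theorem surrogates_adj_in_vrmst {V : Type*} (P : PhyloTree V) (R : V → ℕ)
    (hR : Set.InjOn R P.L) (M : SimpleGraph ↥P.L)
    (hM : IsVRMST (⊤ : SimpleGraph ↥P.L) P.wG (fun x => R x.val) M)
    (i j si sj : V) (hij : P.T.Adj i j)
    (hsi : P.IsSgR R i si) (hsj : P.IsSgR R j sj) (hne : si ≠ sj) :
    M.Adj ⟨si, hsi.1.1⟩ ⟨sj, hsj.1.1⟩ := by
  classical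
  have hpos : 0 < P.len s(i, j) := P.len_pos _ ((P.T.mem_edgeSet).2 hij)
  have hsiL : si ∈ P.L := hsi.1.1
  have hsjL : sj ∈ P.L := hsj.1.1
  have h1 : P.dist si i ≤ P.dist sj i := hsi.1.2 sj hsjL
  have h2 : P.dist sj j ≤ P.dist si j := hsj.1.2 si hsiL
  have same_side : ∀ (_ : P.dist sj i = P.dist si i) (_ : P.dist si j = P.dist sj j), False := by
    intro e1 e2
    have hmemI : sj ∈ P.Sg i := ⟨hsjL, fun l' hl' => by rw [e1]; exact hsi.1.2 l' hl'⟩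
    have hmemJ : si ∈ P.Sg j := ⟨hsiL, fun l' hl' => by rw [e2]; exact hsj.1.2 l' hl'⟩
    exact hne (hR hsiL hsjL (le_antisymm (hsi.2 sj hmemI) (hsj.2 si hmemJ)))
  rcases P.dist_dichotomy hij si with hsiB | hsiA
  · rcases P.dist_dichotomy hij sj with hsjB | hsjA
    · exact (same_side (by linarith) (by linarith)).elim
    · exact absurd h1 (not_le.2 (by linarith))
  · rcases P.dist_dichotomy hij sj with hsjB | hsjA
    swap
    · exact (same_side (by linarith) (by linarith)).elim
    -- main case: hsiA : P.dist si j = P.dist si i + ℓ ; hsjB : P.dist sj i = P.dist sj j + ℓ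
    by_contra hadj
    have hne' : (⟨si, hsiL⟩ : ↥P.L) ≠ ⟨sj, hsjL⟩ := fun h => hne (congrArg Subtype.val h)
    have htop : (⊤ : SimpleGraph ↥P.L).Adj ⟨si, hsiL⟩ ⟨sj, hsjL⟩ := hne'
    obtain ⟨q⟩ := hM.1.2.isConnected.preconnected (⟨si, hsiL⟩ : ↥P.L) ⟨sj, hsjL⟩
    have hall := hM.2 _ _ htop hadj q.bypass q.bypass_isPath
    obtain ⟨a, b, hmem, hQa, hQb⟩ :=
      exists_cross_edge (fun x : ↥P.L => P.dist x.val j = P.dist x.val i + P.len s(i, j))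
        q.bypass hsiA (fun h => by linarith)
    have hbB : P.dist b.val i = P.dist b.val j + P.len s(i, j) :=
      (P.dist_dichotomy hij b.val).resolve_right hQb
    have hcross := P.dist_cross hij hQa hbB
    have hsame := P.dist_cross hij hsiA hsjB
    have hlt := hall s(a, b) hmem
    have wab : P.wG s(a, b) = P.dist a.val b.val := by
      simp [PhyloTree.wG, PhyloTree.wdist]
    have wuv : P.wG s((⟨si, hsiL⟩ : ↥P.L), ⟨sj, hsjL⟩) = P.dist si sj := by
      simp [PhyloTree.wG, PhyloTree.wdist]
    have w1 : P.dist si i ≤ P.dist a.val i := hsi.1.2 a.val a.2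
    have w2 : P.dist sj j ≤ P.dist b.val j := hsj.1.2 b.val b.2
    have hjb : P.dist j b.val = P.dist b.val j := P.dist_comm _ _
    have hjs : P.dist j sj = P.dist sj j := P.dist_comm _ _
    have hge : P.wG s((⟨si, hsiL⟩ : ↥P.L), ⟨sj, hsjL⟩) ≤ P.wG s(a, b) := by
      rw [wab, wuv, hcross, hsame]; linarith
    rcases hlt with hlt | ⟨heq, hrank⟩
    · exact absurd hlt (not_lt.2 hge)
    · rw [wab, wuv, hcross, hsame] at heq
      have ea : P.dist a.val i = P.dist si i := by linarith
      have eb : P.dist b.val j = P.dist sj j := by linarith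
      have hmA : a.val ∈ P.Sg i := ⟨a.2, fun l' hl' => by rw [ea]; exact hsi.1.2 l' hl'⟩
      have hmB : b.val ∈ P.Sg j := ⟨b.2, fun l' hl' => by rw [eb]; exact hsj.1.2 l' hl'⟩
      have ra : R si ≤ R a.val := hsi.2 _ hmA
      have rb : R sj ≤ R b.val := hsj.2 _ hmB
      have hmin : sym2MinR (fun x : ↥P.L => R x.val) s((⟨si, hsiL⟩ : ↥P.L), ⟨sj, hsjL⟩) ≤
          sym2MinR (fun x : ↥P.L => R x.val) s(a, b) := by
        simp only [sym2MinR, Sym2.lift_mk]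
        exact le_min ((min_le_left _ _).trans ra) ((min_le_right _ _).trans rb)
      have hmax : sym2MaxR (fun x : ↥P.L => R x.val) s((⟨si, hsiL⟩ : ↥P.L), ⟨sj, hsjL⟩) ≤
          sym2MaxR (fun x : ↥P.L => R x.val) s(a, b) := by
        simp only [sym2MaxR, Sym2.lift_mk]
        exact max_le (ra.trans (le_max_left _ _)) (rb.trans (le_max_right _ _))
      rcases hrank with h | ⟨_, h⟩ <;> omega
end

section
/- Let G be a finite connected edge-weighted graph with laminar family F, and let g be the subgraph of G consisting of all edges of G that lie in at least one MST of G. Let v be a vertex, let j₁ ≠ j₂ be two neighbors of v in g, and suppose there is a set S ∈ F with j₁ ∈ S, j₂ ∈ S and v ∉ S. Then no MST of G contains both of the edges {v, j₁} and {v, j₂}. -/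
open SimpleGraph

lemma reach_step {V : Type*} (M : SimpleGraph V) (v j : V) :
    ∀ {x y : V}, M.Walk x y →
      ((M \ fromEdgeSet {s(v, j)}).Reachable y v ∨
        (M \ fromEdgeSet {s(v, j)}).Reachable y j) →
      ((M \ fromEdgeSet {s(v, j)}).Reachable x v ∨
        (M \ fromEdgeSet {s(v, j)}).Reachable x j) := by
  intro x y p
  induction p with
  | nil => exact id
  | @cons x x' y h q ih =>
    intro hy
    have hx' := ih hy
    by_cases he : s(x, x') = s(v, j)
    · rw [Sym2.eq_iff] at he
      rcases he with ⟨rfl, rfl⟩ | ⟨rfl, rfl⟩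
      · exact Or.inl (Reachable.refl _)
      · exact Or.inr (Reachable.refl _)
    · have hxy : (M \ fromEdgeSet {s(v, j)}).Adj x x' := by
        rw [sdiff_adj, fromEdgeSet_adj]
        exact ⟨h, fun hc => he hc.1⟩
      rcases hx' with h' | h'
      · exact Or.inl (hxy.reachable.trans h')
      · exact Or.inr (hxy.reachable.trans h')

/-- Dichotomy: after deleting edge `s(v,j)` from a connected graph, every vertex still
reaches `v` or `j`. -/
lemma reach_dichotomy {V : Type*} (M : SimpleGraph V) (hM : M.Connected) (v j : V) :
    ∀ x, (M \ fromEdgeSet {s(v, j)}).Reachable x v ∨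
      (M \ fromEdgeSet {s(v, j)}).Reachable x j := by
  intro x
  obtain ⟨p⟩ := hM.preconnected x v
  exact reach_step M v j p (Or.inl (Reachable.refl _))

/-- Tree edge exchange: removing an edge `s(v,j)` of a tree and adding an edge between
the two resulting components yields a tree. -/
lemma exchange_tree {V : Type*} {M : SimpleGraph V} (hM : M.IsTree) {v j a b : V}
    (hadj : M.Adj v j)
    (ha : (M \ fromEdgeSet {s(v, j)}).Reachable j a)
    (hb : (M \ fromEdgeSet {s(v, j)}).Reachable v b)
    (hab : a ≠ b) :
    ((M \ fromEdgeSet {s(v, j)}) ⊔ edge a b).IsTree := by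
  set Md := M \ fromEdgeSet {s(v, j)} with hMd
  set T' := Md ⊔ edge a b with hT'
  have hbr : ¬ Md.Reachable v j := by
    have := (isAcyclic_iff_forall_adj_isBridge.mp hM.IsAcyclic) hadj
    exact isBridge_iff.mp this
  have hnab : ¬ Md.Reachable a b := fun h =>
    hbr (hb.trans (h.symm.trans ha.symm))
  have habT' : T'.Adj a b := by
    rw [hT', sup_adj, edge_adj]
    exact Or.inr ⟨Or.inl ⟨rfl, rfl⟩, hab⟩
  have hdel : T' \ fromEdgeSet {s(a, b)} = Md := by
    ext x y
    rw [sdiff_adj, hT', sup_adj, edge_adj, fromEdgeSet_adj, Set.mem_singleton_iff]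
    constructor
    · rintro ⟨hl | hr, hnr⟩
      · exact hl
      · exfalso
        apply hnr
        refine ⟨?_, hr.2⟩
        rcases hr.1 with ⟨rfl, rfl⟩ | ⟨rfl, rfl⟩
        · rfl
        · exact Sym2.eq_swap
    · intro hxy
      refine ⟨Or.inl hxy, ?_⟩
      rintro ⟨hc, -⟩
      apply hnab
      rw [Sym2.eq_iff] at hc
      rcases hc with ⟨rfl, rfl⟩ | ⟨rfl, rfl⟩
      · exact hxy.reachable
      · exact hxy.reachable.symm
  have hMdle : Md ≤ T' := le_sup_left
  constructor
  · -- connected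
    have hvj : T'.Reachable j v :=
      ((ha.mono hMdle).trans habT'.reachable).trans (hb.mono hMdle).symm
    haveI hNE : Nonempty V := ⟨v⟩
    refine ⟨fun x y => ?_⟩
    have hx := reach_dichotomy M hM.isConnected v j x
    have hy := reach_dichotomy M hM.isConnected v j y
    rcases hx with hx | hx <;> rcases hy with hy | hy
    · exact (hx.mono hMdle).trans (hy.mono hMdle).symm
    · exact (hx.mono hMdle).trans (hvj.symm.trans (hy.mono hMdle).symm)
    · exact (hx.mono hMdle).trans (hvj.trans (hy.mono hMdle).symm)
    · exact (hx.mono hMdle).trans (hy.mono hMdle).symm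
  · -- acyclic
    intro x c hc
    have hbrab : T'.IsBridge s(a, b) := by
      rw [isBridge_iff, deleteEdges, hdel]
      exact hnab
    have hab_not : s(a, b) ∉ c.edges :=
      (isBridge_iff_adj_and_forall_cycle_notMem habT').mp hbrab c hc
    have hsub : ∀ f ∈ c.edges, f ∈ M.edgeSet := by
      intro f hf
      have hf' := c.edges_subset_edgeSet hf
      rw [hT', edgeSet_sup, edge_edgeSet_of_ne hab] at hf'
      rcases hf' with h' | h'
      · rw [hMd, edgeSet_sdiff] at h'
        exact h'.1
      · exact absurd (h' ▸ hf) hab_not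
    exact hM.IsAcyclic (c.transfer M hsub) (hc.transfer hsub)

/-- if two `g`-neighbors of `v` lie in a common laminar-family set avoiding
`v`, then no MST contains both edges from `v` to them. -/
theorem no_mst_contains_both_edges {V : Type*} [Finite V] (G : SimpleGraph V)
    (w : Sym2 V → ℝ) (hG : G.Connected) (v j₁ j₂ : V) (hne : j₁ ≠ j₂)
    (h1 : ∃ M : SimpleGraph V, IsMST G w M ∧ M.Adj v j₁)
    (h2 : ∃ M : SimpleGraph V, IsMST G w M ∧ M.Adj v j₂)
    (S : Set V) (hS : S ∈ laminarFamily G w)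
    (hj1 : j₁ ∈ S) (hj2 : j₂ ∈ S) (hv : v ∉ S) :
    ∀ M : SimpleGraph V, IsMST G w M → ¬(M.Adj v j₁ ∧ M.Adj v j₂) := by
  classical
  rintro M ⟨⟨hle, hTree⟩, hmin⟩ ⟨hM1, hM2⟩
  rcases hS with rfl | ⟨t, C, rfl⟩
  · exact hv (Set.mem_univ v)
  have hmkj1 : (thresholdGraph G w t).connectedComponentMk j₁ = C := (C.mem_supp_iff j₁).mp hj1
  have hmkj2 : (thresholdGraph G w t).connectedComponentMk j₂ = C := (C.mem_supp_iff j₂).mp hj2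
  -- the removed edge is heavy
  have htw1 : t < w s(v, j₁) := by
    by_contra hle'
    push_neg at hle'
    have hadjH : (thresholdGraph G w t).Adj v j₁ := ⟨hle hM1, hle'⟩
    exact hv ((C.mem_supp_iff v).mpr
      ((ConnectedComponent.sound hadjH.reachable).trans hmkj1))
  -- bridge fact
  set Md := M \ fromEdgeSet {s(v, j₁)} with hMd
  have hbr : ¬ Md.Reachable v j₁ := by
    have := (isAcyclic_iff_forall_adj_isBridge.mp hTree.IsAcyclic) hM1
    exact isBridge_iff.mp this
  set D := Md.connectedComponentMk j₁ with hD
  have hj1D : j₁ ∈ D.supp := (D.mem_supp_iff j₁).mpr rfl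
  have hj2nD : j₂ ∉ D.supp := by
    intro hmem
    have hr : Md.Reachable j₂ j₁ := ConnectedComponent.exact ((D.mem_supp_iff j₂).mp hmem)
    have hadj : Md.Adj j₂ v := by
      rw [hMd, sdiff_adj, fromEdgeSet_adj]
      refine ⟨hM2.symm, ?_⟩
      rintro ⟨hc, -⟩
      have hc' : s(j₂, v) = s(v, j₁) := hc
      rw [Sym2.eq_iff] at hc'
      rcases hc' with ⟨ha', hb'⟩ | ⟨ha', hb'⟩
      · exact hM1.ne hb'
      · exact hne ha'.symm
    exact hbr (hadj.reachable.symm.trans hr)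
  -- a path between j₁ and j₂ in the threshold graph
  obtain ⟨p⟩ : (thresholdGraph G w t).Reachable j₁ j₂ := ConnectedComponent.exact (hmkj1.trans hmkj2.symm)
  obtain ⟨d, _, hdfst, hdsnd⟩ := p.exists_boundary_dart D.supp hj1D hj2nD
  have hdadj : G.Adj d.fst d.snd ∧ w s(d.fst, d.snd) ≤ t := d.adj
  have hab : d.fst ≠ d.snd := fun h => hdsnd (h ▸ hdfst)
  have ha : Md.Reachable j₁ d.fst :=
    (ConnectedComponent.exact ((D.mem_supp_iff d.fst).mp hdfst)).symm
  have hb : Md.Reachable v d.snd := by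
    rcases reach_dichotomy M hTree.isConnected v j₁ d.snd with h' | h'
    · exact h'.symm
    · exact absurd ((D.mem_supp_iff d.snd).mpr (ConnectedComponent.sound h')) hdsnd
  -- the exchanged tree
  set T' := Md ⊔ edge d.fst d.snd with hT'
  have hT'tree : T'.IsTree := exchange_tree hTree hM1 ha hb hab
  have hT'le : T' ≤ G := by
    refine sup_le (le_trans sdiff_le hle) ?_
    intro x y hxy
    rw [edge_adj] at hxy
    rcases hxy.1 with ⟨rfl, rfl⟩ | ⟨rfl, rfl⟩
    · exact hdadj.1
    · exact hdadj.1.symm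
  -- edge set bookkeeping
  have hene : s(d.fst, d.snd) ≠ s(v, j₁) := by
    intro h
    rw [h] at hdadj
    linarith [hdadj.2]
  have hfnotM : s(d.fst, d.snd) ∉ M.edgeSet := by
    intro hmem
    have hadj : Md.Adj d.fst d.snd := by
      rw [hMd, sdiff_adj, fromEdgeSet_adj]
      exact ⟨M.mem_edgeSet.mp hmem, fun hc => hene hc.1⟩
    exact hdsnd ((D.mem_supp_iff d.snd).mpr
      ((ConnectedComponent.sound hadj.reachable.symm).trans
        ((D.mem_supp_iff d.fst).mp hdfst)))
  have hTe : T'.edgeSet = insert s(d.fst, d.snd) (M.edgeSet \ {s(v, j₁)}) := by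
    rw [hT', edgeSet_sup, edge_edgeSet_of_ne hab, hMd, edgeSet_sdiff,
      edgeSet_fromEdgeSet]
    ext g
    simp only [Set.mem_union, Set.mem_diff, Set.mem_singleton_iff, Set.mem_insert_iff,
      Set.mem_setOf_eq]
    constructor
    · rintro (⟨hg, hg2⟩ | rfl)
      · refine Or.inr ⟨hg, fun h => hg2 ⟨h, ?_⟩⟩
        rw [h, Sym2.mem_diagSet, Sym2.isDiag_iff_proj_eq]
        exact hM1.ne
      · exact Or.inl rfl
    · rintro (rfl | ⟨hg, hg2⟩)
      · exact Or.inr rfl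
      · exact Or.inl ⟨hg, fun h => hg2 h.1⟩
  -- weights
  set AM := M.edgeSet.toFinite.toFinset with hAM
  have heAM : s(v, j₁) ∈ AM := Set.Finite.mem_toFinset _ |>.mpr (M.mem_edgeSet.mpr hM1)
  have hAT : T'.edgeSet.toFinite.toFinset = insert s(d.fst, d.snd) (AM.erase s(v, j₁)) := by
    ext g
    simp only [Set.Finite.mem_toFinset, hTe, Set.mem_insert_iff, Set.mem_diff,
      Set.mem_singleton_iff, Finset.mem_insert, Finset.mem_erase, hAM]
    tauto
  have hfer : s(d.fst, d.snd) ∉ AM.erase s(v, j₁) := by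
    intro h
    exact hfnotM ((Set.Finite.mem_toFinset _).mp (Finset.mem_of_mem_erase h))
  have hsum : totalWeight T' w = w s(d.fst, d.snd) + (totalWeight M w - w s(v, j₁)) := by
    have h2' := Finset.sum_erase_add AM w heAM
    rw [totalWeight, hAT, Finset.sum_insert hfer, totalWeight]
    linarith
  have hmin' := hmin T' ⟨hT'le, hT'tree⟩
  linarith [hdadj.2]
end

section
/- Let T be a phylogenetic tree with labeled vertex set L and let G be its distance graph. Let h be a hidden vertex of T such that some labeled vertex l is a leaf of T, is adjacent to h in T, and satisfies l ∈ Sg(h), and let v ∈ Sg(h) with v ≠ l. Then for every labeled vertex j with j ∉ Sg(h) such that the edge {l, j} lies in at least one MST of G: (a) d(j, l) = d(j, v), and (b) the edge {v, j} also lies in at least one MST of G. -/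
open SimpleGraph

/-! ### Auxiliary lemmas -/

section AuxList

private lemma sum_toFinset_le {α : Type*} [DecidableEq α] :
    ∀ (l : List α) (f : α → ℝ), (∀ a ∈ l, 0 ≤ f a) →
      ∑ a ∈ l.toFinset, f a ≤ (l.map f).sum := by
  intro l
  induction l with
  | nil => simp
  | cons a t ih =>
    intro f hf
    simp only [List.toFinset_cons, List.map_cons, List.sum_cons]
    by_cases ha : a ∈ t.toFinset
    · rw [Finset.insert_eq_self.mpr ha]
      have := ih f (fun x hx => hf x (List.mem_cons_of_mem _ hx))
      have h0 : 0 ≤ f a := hf a List.mem_cons_self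
      linarith
    · rw [Finset.sum_insert ha]
      have := ih f (fun x hx => hf x (List.mem_cons_of_mem _ hx))
      linarith

end AuxList

namespace PhyloTree

variable {V : Type*} (P : PhyloTree V)

lemma dist_eq_of_isPath_s10 {u v : V} (p : P.T.Walk u v) (hp : p.IsPath) :
    P.dist u v = (p.edges.map P.len).sum := by
  have hq : p = P.path u v :=
    (P.isTree.existsUnique_path u v).unique hp (P.path_isPath u v)
  rw [dist, ← hq]

lemma dist_le_walk {u v : V} (p : P.T.Walk u v) :
    P.dist u v ≤ (p.edges.map P.len).sum := by
  classical
  have h0 : ∀ e ∈ p.edges, 0 ≤ P.len e := fun e he =>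
    (P.len_pos e (p.edges_subset_edgeSet he)).le
  rw [P.dist_eq_of_isPath_s10 p.bypass p.bypass_isPath,
    ← List.sum_toFinset _ p.bypass_isPath.edges_nodup]
  calc ∑ e ∈ p.bypass.edges.toFinset, P.len e
      ≤ ∑ e ∈ p.edges.toFinset, P.len e := by
        refine Finset.sum_le_sum_of_subset_of_nonneg ?_ fun e he _ =>
          h0 e (List.mem_toFinset.mp he)
        intro e he
        rw [List.mem_toFinset] at he ⊢
        exact p.edges_bypass_subset he
    _ ≤ (p.edges.map P.len).sum := sum_toFinset_le _ _ h0

lemma dist_triangle (u v w : V) : P.dist u w ≤ P.dist u v + P.dist v w := by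
  have := P.dist_le_walk ((P.path u v).append (P.path v w))
  rwa [SimpleGraph.Walk.edges_append, List.map_append, List.sum_append] at this

lemma dist_leaf_eq {h l : V} (hleaf : (P.T.neighborSet l).ncard = 1)
    (hadj : P.T.Adj h l) {u : V} (hu : u ≠ l) :
    P.dist l u = P.dist l h + P.dist h u := by
  obtain ⟨a, ha⟩ := Set.ncard_eq_one.mp hleaf
  have hha : h = a := by
    have : h ∈ P.T.neighborSet l := hadj.symm
    rw [ha] at this
    exact this
  subst hha
  have hns : P.T.neighborSet l = {h} := ha
  have h1 : P.dist l h = P.len s(l, h) := by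
    have hp : (SimpleGraph.Walk.cons hadj.symm SimpleGraph.Walk.nil :
        P.T.Walk l h).IsPath := by
      simp [SimpleGraph.Walk.cons_isPath_iff, hadj.ne']
    rw [P.dist_eq_of_isPath_s10 _ hp]
    simp
  have H : ∀ (p : P.T.Walk l u), p.IsPath →
      (p.edges.map P.len).sum = P.len s(l, h) + P.dist h u := by
    intro p hp
    cases p with
    | nil => exact absurd rfl hu
    | @cons _ x _ hax q =>
      have hx : x = h := by
        have : x ∈ P.T.neighborSet l := hax
        rw [hns] at this
        exact this
      subst hx
      rw [SimpleGraph.Walk.edges_cons, List.map_cons, List.sum_cons,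
        ← P.dist_eq_of_isPath_s10 q hp.of_cons]
  have := H (P.path l u) (P.path_isPath l u)
  rw [dist, this, h1]

lemma wG_mk {u₁ u₂ : V} (h1 : u₁ ∈ P.L) (h2 : u₂ ∈ P.L) :
    P.wG s(⟨u₁, h1⟩, ⟨u₂, h2⟩) = P.dist u₁ u₂ := rfl

end PhyloTree

section Swap

open SimpleGraph

variable {W : Type*}

private lemma reach_split_aux (M : SimpleGraph W) (a b : W) :
    ∀ {z w : W} (_ : M.Walk z w),
      (M \ fromEdgeSet {s(a, b)}).Reachable z w ∨
      (M \ fromEdgeSet {s(a, b)}).Reachable z a ∨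
      (M \ fromEdgeSet {s(a, b)}).Reachable z b := by
  intro z w p
  induction p with
  | nil => exact Or.inl (Reachable.refl _)
  | @cons z x w hzx q ih =>
    by_cases hc : s(z, x) = s(a, b)
    · rcases Sym2.eq_iff.mp hc with ⟨rfl, rfl⟩ | ⟨rfl, rfl⟩
      · exact Or.inr (Or.inl (Reachable.refl _))
      · exact Or.inr (Or.inr (Reachable.refl _))
    · have hadj : (M \ fromEdgeSet {s(a, b)}).Adj z x := by
        rw [sdiff_adj]
        refine ⟨hzx, ?_⟩
        rw [fromEdgeSet_adj]
        rintro ⟨hmem, -⟩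
        exact hc (Set.mem_singleton_iff.mp hmem)
      rcases ih with h | h | h
      · exact Or.inl (hadj.reachable.trans h)
      · exact Or.inr (Or.inl (hadj.reachable.trans h))
      · exact Or.inr (Or.inr (hadj.reachable.trans h))

private lemma reach_split (M : SimpleGraph W) (hconn : M.Connected) (a b z : W) :
    (M \ fromEdgeSet {s(a, b)}).Reachable z a ∨
    (M \ fromEdgeSet {s(a, b)}).Reachable z b := by
  obtain ⟨p⟩ := hconn.preconnected z a
  rcases reach_split_aux M a b p with h | h | h
  · exact Or.inl h
  · exact Or.inl h
  · exact Or.inr h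

private lemma swap_tree (M : SimpleGraph W) (hM : M.IsTree) {a b x y : W}
    (hab : M.Adj a b) (hxy : x ≠ y)
    (hxa : (M \ fromEdgeSet {s(a, b)}).Reachable x a)
    (hyb : (M \ fromEdgeSet {s(a, b)}).Reachable y b) :
    ((M \ fromEdgeSet {s(a, b)}) ⊔ fromEdgeSet {s(x, y)}).IsTree ∧
      s(x, y) ∉ (M \ fromEdgeSet {s(a, b)}).edgeSet := by
  set M₁ := M \ fromEdgeSet {s(a, b)} with hM₁
  have hnr : ¬M₁.Reachable a b := by
    have hbr : M.IsBridge s(a, b) :=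
      isAcyclic_iff_forall_adj_isBridge.mp hM.IsAcyclic hab
    exact isBridge_iff.mp hbr
  have hne : s(x, y) ∉ M₁.edgeSet := by
    intro hmem
    have : M₁.Adj x y := hmem
    exact hnr (hxa.symm.trans (this.reachable.trans hyb))
  refine ⟨⟨?_, ?_⟩, hne⟩
  · -- connected
    have hedge : (M₁ ⊔ fromEdgeSet {s(x, y)}).Adj x y := by
      rw [sup_adj, fromEdgeSet_adj]
      exact Or.inr ⟨rfl, hxy⟩
    have hba : (M₁ ⊔ fromEdgeSet {s(x, y)}).Reachable b a :=
      ((hyb.mono le_sup_left).symm.trans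
        ((hedge.symm.reachable).trans (hxa.mono le_sup_left)))
    have hall : ∀ z : W, (M₁ ⊔ fromEdgeSet {s(x, y)}).Reachable z a := by
      intro z
      rcases reach_split M hM.isConnected a b z with hz | hz
      · exact hz.mono le_sup_left
      · exact (hz.mono le_sup_left).trans hba
    haveI hnonempty : Nonempty W := hM.isConnected.nonempty
    exact ⟨fun u v => (hall u).trans (hall v).symm⟩
  · -- acyclic
    intro u c hc
    by_cases he : s(x, y) ∈ c.edges
    · have hreach := ((adj_and_reachable_delete_edges_iff_exists_cycle
        (G := M₁ ⊔ fromEdgeSet {s(x, y)}) (v := x) (w := y)).mpr ⟨u, c, hc, he⟩).2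
      have hle : ((M₁ ⊔ fromEdgeSet {s(x, y)}) \ fromEdgeSet {s(x, y)}) ≤ M₁ := by
        intro u' v' h'
        rw [sdiff_adj, sup_adj] at h'
        rcases h'.1 with h'' | h''
        · exact h''
        · exact absurd h'' h'.2
      exact hnr (hxa.symm.trans (((hreach.mono hle).trans hyb)))
    · have hsub : ∀ e ∈ c.edges, e ∈ M.edgeSet := by
        intro e hec
        have := c.edges_subset_edgeSet hec
        rw [edgeSet_sup, edgeSet_fromEdgeSet] at this
        rcases this with h' | h'
        · rw [hM₁, edgeSet_sdiff] at h'
          exact h'.1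
        · exfalso
          rcases h' with ⟨h1, -⟩
          rw [Set.mem_singleton_iff] at h1
          exact he (h1 ▸ hec)
      exact hM.IsAcyclic (c.transfer M hsub) (hc.transfer hsub)

private lemma swap_weight [Finite W] (M : SimpleGraph W) (w : Sym2 W → ℝ) {a b x y : W}
    (hab : M.Adj a b) (hxy : x ≠ y)
    (hne : s(x, y) ∉ (M \ fromEdgeSet {s(a, b)}).edgeSet) :
    totalWeight ((M \ fromEdgeSet {s(a, b)}) ⊔ fromEdgeSet {s(x, y)}) w
      = totalWeight M w - w s(a, b) + w s(x, y) := by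
  classical
  have hE : ((M \ fromEdgeSet {s(a, b)}) ⊔ fromEdgeSet {s(x, y)}).edgeSet
      = insert s(x, y) (M.edgeSet \ {s(a, b)}) := by
    rw [edgeSet_sup, edgeSet_sdiff, edgeSet_fromEdgeSet, edgeSet_fromEdgeSet]
    ext e
    simp only [Set.mem_union, Set.mem_diff, Set.mem_singleton_iff, Set.mem_insert_iff,
      Set.mem_setOf_eq]
    constructor
    · rintro (⟨h1, h2⟩ | ⟨h1, -⟩)
      · refine Or.inr ⟨h1, ?_⟩
        intro hd
        exact h2 ⟨hd, by rw [hd]; simpa using hab.ne⟩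
      · exact Or.inl h1
    · rintro (h1 | ⟨h1, h2⟩)
      · exact Or.inr ⟨h1, by rw [h1]; simpa using hxy⟩
      · refine Or.inl ⟨h1, ?_⟩
        rintro ⟨h3, -⟩
        exact h2 h3
  have hne' : s(x, y) ∉ M.edgeSet \ {s(a, b)} := by
    intro hmem
    apply hne
    rw [edgeSet_sdiff, edgeSet_fromEdgeSet]
    refine ⟨hmem.1, ?_⟩
    intro h'
    exact hmem.2 h'.1
  have hmemab : s(a, b) ∈ (M.edgeSet.toFinite.toFinset) := by
    rw [Set.Finite.mem_toFinset]
    exact hab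
  have hF : (((M \ fromEdgeSet {s(a, b)}) ⊔ fromEdgeSet {s(x, y)}).edgeSet.toFinite.toFinset)
      = insert s(x, y) ((M.edgeSet.toFinite.toFinset).erase s(a, b)) := by
    ext e
    simp only [Set.Finite.mem_toFinset, hE, Set.mem_insert_iff, Set.mem_diff,
      Set.mem_singleton_iff, Finset.mem_insert, Finset.mem_erase]
    tauto
  have hnotmem : s(x, y) ∉ (M.edgeSet.toFinite.toFinset).erase s(a, b) := by
    rw [Finset.mem_erase, Set.Finite.mem_toFinset]
    intro h'
    exact hne' ⟨h'.2, h'.1⟩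
  unfold totalWeight
  rw [hF, Finset.sum_insert hnotmem]
  have h2 := Finset.add_sum_erase _ w hmemab
  linarith

end Swap

/-- for a leaf `l ∈ Sg(h)` adjacent to the hidden vertex `h` and any other
`v ∈ Sg(h)`: every labeled `j ∉ Sg(h)` joined to `l` by an edge of some MST satisfies
`d(j,l) = d(j,v)`, and the edge `{v,j}` also lies in some MST. -/
theorem leaf_neighbor_transfer {V : Type*} [Finite V] (P : PhyloTree V)
    (h : V) (hh : h ∉ P.L)
    (l : V) (hleaf : (P.T.neighborSet l).ncard = 1) (hadj : P.T.Adj h l)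
    (hl : l ∈ P.Sg h) (v : V) (hv : v ∈ P.Sg h) (hvl : v ≠ l)
    (j : V) (hj : j ∈ P.L) (hjs : j ∉ P.Sg h)
    (hje : ∃ M : SimpleGraph ↥P.L, IsMST (⊤ : SimpleGraph ↥P.L) P.wG M ∧
      M.Adj ⟨l, hl.1⟩ ⟨j, hj⟩) :
    P.dist j l = P.dist j v ∧
    ∃ M : SimpleGraph ↥P.L, IsMST (⊤ : SimpleGraph ↥P.L) P.wG M ∧
      M.Adj ⟨v, hv.1⟩ ⟨j, hj⟩ := by
  classical
  obtain ⟨M, hMst, hMadj⟩ := hje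
  haveI := P.finV
  set a : ↥P.L := ⟨l, hl.1⟩ with ha
  set b : ↥P.L := ⟨j, hj⟩ with hb
  set c : ↥P.L := ⟨v, hv.1⟩ with hc
  have hjl : j ≠ l := fun e => hjs (by rw [e]; exact hl)
  have hvj : v ≠ j := fun e => hjs (by rw [← e]; exact hv)
  have dlh_lt : P.dist l h < P.dist j h := by
    have hns : ¬(j ∈ P.L ∧ ∀ l' ∈ P.L, P.dist j h ≤ P.dist l' h) := hjs
    push_neg at hns
    obtain ⟨l', hl', hlt⟩ := hns hj
    exact lt_of_le_of_lt (hl.2 l' hl') hlt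
  have dvh : P.dist v h = P.dist l h := le_antisymm (hv.2 l hl.1) (hl.2 v hv.1)
  have dlv : P.dist l v = P.dist l h + P.dist h v := P.dist_leaf_eq hleaf hadj hvl
  have dlj : P.dist l j = P.dist l h + P.dist h j := P.dist_leaf_eq hleaf hadj hjl
  have dhv : P.dist h v = P.dist v h := P.dist_comm h v
  have dhj : P.dist h j = P.dist j h := P.dist_comm h j
  have hlv_lt : P.dist l v < P.dist l j := by
    rw [dlv, dlj]
    linarith
  have hvj_le : P.dist v j ≤ P.dist l j := by
    have ht := P.dist_triangle v h j
    rw [dlj]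
    linarith
  have hMtree : M.IsTree := hMst.1.2
  have wab : P.wG s(a, b) = P.dist l j := P.wG_mk hl.1 hj
  have wac : P.wG s(a, c) = P.dist l v := P.wG_mk hl.1 hv.1
  have wcb : P.wG s(c, b) = P.dist v j := P.wG_mk hv.1 hj
  rcases reach_split M hMtree.isConnected a b c with hca | hcb
  · have hcb' : c ≠ b := fun e => hvj (congrArg Subtype.val e)
    obtain ⟨htree, hnein⟩ := swap_tree M hMtree hMadj hcb' hca (Reachable.refl b)
    have hw := swap_weight M P.wG hMadj hcb' hnein
    have hspan : IsSpanningTree (⊤ : SimpleGraph ↥P.L)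
        ((M \ fromEdgeSet {s(a, b)}) ⊔ fromEdgeSet {s(c, b)}) := ⟨le_top, htree⟩
    have hle := hMst.2 _ hspan
    rw [hw] at hle
    have heq : P.wG s(c, b) = P.wG s(a, b) := by
      refine le_antisymm ?_ (by linarith)
      rw [wab, wcb]
      exact hvj_le
    have hwEq : totalWeight ((M \ fromEdgeSet {s(a, b)}) ⊔ fromEdgeSet {s(c, b)}) P.wG
        = totalWeight M P.wG := by
      rw [hw, heq]; ring
    have heqd : P.dist v j = P.dist l j := by rw [← wab, ← wcb, heq]
    refine ⟨?_, ⟨_, ⟨hspan, ?_⟩, ?_⟩⟩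
    · rw [P.dist_comm j l, P.dist_comm j v, heqd]
    · intro M'' h''
      rw [hwEq]
      exact hMst.2 M'' h''
    · rw [sup_adj, fromEdgeSet_adj]
      exact Or.inr ⟨rfl, hcb'⟩
  · exfalso
    have hac : a ≠ c := fun e => hvl (congrArg Subtype.val e).symm
    obtain ⟨htree, hnein⟩ := swap_tree M hMtree hMadj hac (Reachable.refl a) hcb
    have hw := swap_weight M P.wG hMadj hac hnein
    have hle := hMst.2 _ ⟨le_top, htree⟩
    rw [hw, wab, wac] at hle
    linarith
end

section
/- Let T be a phylogenetic tree with labeled vertex set L and let G be its distance graph, with g the subgraph of G consisting of all edges lying in at least one MST of G. Then for every labeled vertex v, δ_max(v) equals the sum, over all values w ∈ ℝ that occur as edge weights of G, of the number of connected components C of the strict threshold subgraph G_{<w} (vertex set L, edges of weight strictly less than w) such that some vertex j ∈ C is joined to v by an edge of g of weight exactly w. -/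
open SimpleGraph

section AuxLemmas
variable {α : Type*}

variable {α : Type*}

lemma finite_simpleGraph [Finite α] : Finite (SimpleGraph α) :=
  Finite.of_injective (fun G => G.Adj)
    (fun G H h => by ext u v; exact iff_of_eq (congrFun (congrFun h u) v))

lemma reachable_of_walk {T H : SimpleGraph α}
    (h : ∀ u v, T.Adj u v → H.Reachable u v) {u v : α} (p : T.Walk u v) :
    H.Reachable u v := by
  induction p with
  | nil => exact Reachable.refl _
  | cons ha _ ih => exact (h _ _ ha).trans ih

lemma connected_of_forall_adj {T H : SimpleGraph α} (hT : T.Connected)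
    (h : ∀ u v, T.Adj u v → H.Reachable u v) : H.Connected := by
  haveI : Nonempty α := hT.nonempty
  exact ⟨fun u v => reachable_of_walk h (hT.preconnected u v).some⟩

/-- Split a trail at an edge. -/
lemma walk_split {T : SimpleGraph α} {u v a b : α} (p : T.Walk u v) (hp : p.IsTrail)
    (hf : s(a, b) ∈ p.edges) :
    (∃ (p₁ : T.Walk u a) (p₂ : T.Walk b v), s(a,b) ∉ p₁.edges ∧ s(a,b) ∉ p₂.edges) ∨
    (∃ (p₁ : T.Walk u b) (p₂ : T.Walk a v), s(a,b) ∉ p₁.edges ∧ s(a,b) ∉ p₂.edges) := by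
  induction p with
  | nil => simp at hf
  | @cons u c v ha q ih =>
    rw [Walk.edges_cons] at hf
    rw [Walk.isTrail_cons] at hp
    rcases List.mem_cons.mp hf with heq | hmem
    · rcases Sym2.eq_iff.mp heq.symm with ⟨rfl, rfl⟩ | ⟨rfl, rfl⟩
      · exact Or.inl ⟨Walk.nil, q, by simp,
          by first | exact hp.2 | (rw [Sym2.eq_swap]; exact hp.2)⟩
      · exact Or.inr ⟨Walk.nil, q, by simp,
          by first | exact hp.2 | (rw [Sym2.eq_swap]; exact hp.2)⟩
    · have hne : s(a,b) ≠ s(u,c) := fun h => hp.2 (h ▸ hmem)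
      rcases ih hp.1 hmem with ⟨p₁, p₂, h₁, h₂⟩ | ⟨p₁, p₂, h₁, h₂⟩
      · exact Or.inl ⟨Walk.cons ha p₁, p₂, by simp [h₁, hne], h₂⟩
      · exact Or.inr ⟨Walk.cons ha p₁, p₂, by simp [h₁, hne], h₂⟩

/-- Crossing lemma: a walk from inside to outside an `H`-reachability class crosses it. -/
lemma exists_cross {H K : SimpleGraph α} {a c d : α} (q : K.Walk c d)
    (hc : H.Reachable a c) (hd : ¬ H.Reachable a d) :
    ∃ x y : α, s(x, y) ∈ q.edges ∧ K.Adj x y ∧ H.Reachable a x ∧ ¬ H.Reachable a y := by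
  induction q with
  | nil => exact absurd hc hd
  | @cons c c' d ha q ih =>
    by_cases h' : H.Reachable a c'
    · obtain ⟨x, y, hm, h1, h2, h3⟩ := ih h' hd
      exact ⟨x, y, by simp [hm], h1, h2, h3⟩
    · exact ⟨c, c', by simp, ha, hc, h'⟩

/-- After deleting an edge of a tree, every vertex is reachable from one endpoint. -/
lemma tree_delete_sides_aux {M H : SimpleGraph α} {a b : α}
    (h2 : ∀ u v : α, M.Adj u v → s(u,v) = s(a,b) ∨ H.Adj u v) {c u : α} (p : M.Walk c u)
    (hc : H.Reachable a c ∨ H.Reachable b c) :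
    H.Reachable a u ∨ H.Reachable b u := by
  induction p with
  | nil => exact hc
  | @cons c c' u ha q ih =>
    refine ih ?_
    rcases h2 _ _ ha with heq | hadj
    · rcases Sym2.eq_iff.mp heq with ⟨rfl, rfl⟩ | ⟨rfl, rfl⟩
      · exact Or.inr (Reachable.refl _)
      · exact Or.inl (Reachable.refl _)
    · rcases hc with h | h
      · exact Or.inl (h.trans hadj.reachable)
      · exact Or.inr (h.trans hadj.reachable)

lemma tree_delete_sides {M : SimpleGraph α} (hM : M.Connected) {a b : α}
    (u : α) : (M.deleteEdges {s(a,b)}).Reachable a u ∨ (M.deleteEdges {s(a,b)}).Reachable b u := by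
  refine tree_delete_sides_aux (H := M.deleteEdges {s(a,b)}) ?_ ((hM.preconnected a u).some)
    (Or.inl (Reachable.refl _))
  intro x y hxy
  by_cases h : s(x,y) = s(a,b)
  · exact Or.inl h
  · exact Or.inr (by simp [deleteEdges_adj, hxy, h])

lemma tree_delete_not_reachable {M : SimpleGraph α} (hM : M.IsTree) {a b : α}
    (hab : M.Adj a b) : ¬ (M.deleteEdges {s(a,b)}).Reachable a b := by
  intro h
  classical
  obtain ⟨q⟩ := h
  set H := M.deleteEdges {s(a,b)}
  have hq : (q.toPath : H.Walk a b).IsPath := (q.toPath).2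
  have hsub : ∀ e ∈ (q.toPath : H.Walk a b).edges, e ∈ M.edgeSet := by
    intro e he
    exact (edgeSet_deleteEdges _ ▸ Walk.edges_subset_edgeSet _ he).1
  have hnot : s(b, a) ∉ ((q.toPath : H.Walk a b).transfer M hsub).edges := by
    rw [Walk.edges_transfer]
    intro hmem
    have := Walk.edges_subset_edgeSet _ hmem
    rw [edgeSet_deleteEdges] at this
    exact this.2 (by rw [Sym2.eq_swap]; rfl)
  have hcyc := Path.cons_isCycle ⟨_, hq.transfer hsub⟩ hab.symm hnot
  exact hM.IsAcyclic _ hcyc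

variable {α : Type*}

lemma exists_spanning_tree [Finite α] (G : SimpleGraph α) (hG : G.Connected) :
    ∃ T, T ≤ G ∧ T.IsTree := by
  classical
  generalize hn : G.edgeSet.ncard = n
  induction n using Nat.strong_induction_on generalizing G with
  | _ n ih =>
  by_cases hac : G.IsAcyclic
  · exact ⟨G, le_rfl, hG, hac⟩
  · simp only [IsAcyclic] at hac
    push_neg at hac
    obtain ⟨v, c, hc⟩ := hac
    cases c with
    | nil => exact absurd hc (by intro h; exact h.ne_nil rfl)
    | @cons _ b _ hadj q =>
      have hmem : s(v, b) ∈ (Walk.cons hadj q).edges := by simp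
      have hnb : ¬ G.IsBridge s(v, b) := by
        rw [isBridge_iff_mem_and_forall_cycle_notMem]
        push_neg
        exact ⟨v, _, hc, hmem⟩
        exact G.mem_edgeSet.mpr hadj
      rw [isBridge_iff] at hnb
      push_neg at hnb
      have hreach : (G.deleteEdges {s(v, b)}).Reachable v b := hnb
      set H := G.deleteEdges {s(v, b)} with hH
      have hHconn : H.Connected := by
        refine connected_of_forall_adj hG ?_
        intro x y hxy
        by_cases hxe : s(x, y) = s(v, b)
        · rcases Sym2.eq_iff.mp hxe with ⟨rfl, rfl⟩ | ⟨rfl, rfl⟩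
          · exact hreach
          · exact hreach.symm
        · exact Adj.reachable (by simp [hH, deleteEdges_adj, hxy, hxe])
      have hcard : H.edgeSet.ncard < n := by
        rw [← hn, hH, edgeSet_deleteEdges]
        have : G.edgeSet.Finite := Set.toFinite _
        have hlt := Set.ncard_diff_singleton_lt_of_mem (G.mem_edgeSet.mpr hadj) this
        simpa using hlt
      obtain ⟨T, hle, hT⟩ := ih _ hcard H hHconn rfl
      exact ⟨T, hle.trans (deleteEdges_le _), hT⟩

lemma tree_ncard_edgeSet [Finite α] {T : SimpleGraph α} (hT : T.IsTree) :
    T.edgeSet.ncard + 1 = Nat.card α := by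
  classical
  cases nonempty_fintype α
  haveI : Fintype ↑T.edgeSet := (Set.toFinite _).fintype
  rw [Nat.card_eq_fintype_card, ← hT.card_edgeFinset, Set.ncard_eq_toFinset_card']
  congr

lemma tree_of_connected_ncard [Finite α] {G : SimpleGraph α} (hG : G.Connected)
    (h : G.edgeSet.ncard + 1 = Nat.card α) : G.IsTree := by
  obtain ⟨T, hle, hT⟩ := exists_spanning_tree G hG
  have hsub : T.edgeSet ⊆ G.edgeSet := edgeSet_mono hle
  have hcard : G.edgeSet.ncard ≤ T.edgeSet.ncard := by
    have := tree_ncard_edgeSet hT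
    omega
  have : T.edgeSet = G.edgeSet := Set.eq_of_subset_of_ncard_le hsub hcard (Set.toFinite _)
  rwa [← edgeSet_inj.mp this]

lemma swap_edgeSet {M : SimpleGraph α} {e f : Sym2 α} (hed : ¬ e.IsDiag) :
    (M.deleteEdges {f} ⊔ fromEdgeSet {e}).edgeSet = (M.edgeSet \ {f}) ∪ {e} := by
  rw [edgeSet_sup, edgeSet_deleteEdges, edgeSet_fromEdgeSet]
  congr 1
  ext x
  simp only [Set.mem_diff, Set.mem_singleton_iff, Set.mem_setOf_eq, and_iff_left_iff_imp]
  rintro rfl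
  exact hed

lemma swap_isTree [Finite α] {M : SimpleGraph α} (hM : M.IsTree) {e f : Sym2 α}
    (hf : f ∈ M.edgeSet) (he : e ∉ M.edgeSet) (hed : ¬ e.IsDiag)
    (hconn : (M.deleteEdges {f} ⊔ fromEdgeSet {e}).Connected) :
    (M.deleteEdges {f} ⊔ fromEdgeSet {e}).IsTree := by
  refine tree_of_connected_ncard hconn ?_
  rw [swap_edgeSet hed, Set.union_singleton]
  rw [Set.ncard_insert_of_notMem (fun hmem => he hmem.1)
    ((Set.toFinite _).diff)]
  rw [Set.ncard_diff_singleton_of_mem hf]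
  have h1 : 0 < M.edgeSet.ncard := (Set.ncard_pos (Set.toFinite _)).mpr ⟨f, hf⟩
  have h2 := tree_ncard_edgeSet hM
  omega

lemma swap_totalWeight [Finite α] {M : SimpleGraph α} {e f : Sym2 α} (w : Sym2 α → ℝ)
    (hf : f ∈ M.edgeSet) (he : e ∉ M.edgeSet) (hed : ¬ e.IsDiag) :
    totalWeight (M.deleteEdges {f} ⊔ fromEdgeSet {e}) w = totalWeight M w - w f + w e := by
  classical
  have hes := swap_edgeSet (M := M) (f := f) hed
  unfold totalWeight
  have hfin : (M.deleteEdges {f} ⊔ fromEdgeSet {e}).edgeSet.toFinite.toFinset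
      = insert e ((M.edgeSet.toFinite.toFinset).erase f) := by
    ext x
    simp only [Set.Finite.mem_toFinset, hes, Set.mem_union, Set.mem_diff,
      Set.mem_singleton_iff, Finset.mem_insert, Finset.mem_erase]
    tauto
  rw [hfin, Finset.sum_insert
    (fun hmem => he (by simpa [Set.Finite.mem_toFinset] using Finset.mem_of_mem_erase hmem))]
  have h2 := Finset.sum_erase_add (M.edgeSet.toFinite.toFinset) w
    ((Set.Finite.mem_toFinset _).mpr hf)
  linarith

lemma exists_mst [Finite α] [Nonempty α] (w : Sym2 α → ℝ) :
    ∃ M, IsMST (⊤ : SimpleGraph α) w M := by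
  classical
  haveI : Finite (SimpleGraph α) := Finite.of_injective (fun G => G.Adj)
    (fun G H h => by ext u v; exact iff_of_eq (congrFun (congrFun h u) v))
  have hS : {M : SimpleGraph α | IsSpanningTree ⊤ M}.Nonempty := by
    obtain ⟨T, h1, h2⟩ := exists_spanning_tree (⊤ : SimpleGraph α) connected_top
    exact ⟨T, h1, h2⟩
  obtain ⟨M, hM, hmin⟩ := (Set.toFinite _).toFinset.exists_min_image (totalWeight · w)
    (by rwa [Set.Finite.toFinset_nonempty])
  rw [Set.Finite.mem_toFinset] at hM
  exact ⟨M, hM, fun M' hM' => hmin M' (by rwa [Set.Finite.mem_toFinset])⟩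

lemma exists_max_mst [Finite α] (w : Sym2 α → ℝ) (N : SimpleGraph α → ℕ)
    (h : ∃ M, IsMST (⊤ : SimpleGraph α) w M) :
    ∃ M, IsMST (⊤ : SimpleGraph α) w M ∧
      ∀ M', IsMST (⊤ : SimpleGraph α) w M' → N M' ≤ N M := by
  classical
  haveI : Finite (SimpleGraph α) := Finite.of_injective (fun G => G.Adj)
    (fun G H h => by ext u v; exact iff_of_eq (congrFun (congrFun h u) v))
  obtain ⟨M, hM, hmax⟩ := (Set.toFinite {M : SimpleGraph α | IsMST ⊤ w M}).toFinset.exists_max_image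
    N (by rw [Set.Finite.toFinset_nonempty]; exact h)
  rw [Set.Finite.mem_toFinset] at hM
  exact ⟨M, hM, fun M' hM' => hmax M' (by rwa [Set.Finite.mem_toFinset])⟩


lemma reach_mono_delete {M : SimpleGraph α} {f : Sym2 α} {E : SimpleGraph α} {c d : α}
    (q : M.Walk c d) (h : f ∉ q.edges) :
    (M.deleteEdges {f} ⊔ E).Reachable c d :=
  Reachable.mono le_sup_left
    ⟨q.toDeleteEdges {f} (fun e' he' h' => h (Set.mem_singleton_iff.mp h' ▸ he'))⟩

lemma swap_connected_of_path {M : SimpleGraph α} (hM : M.Connected) {x y : α}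
    (hxy : x ≠ y) (p : M.Walk x y) (hp : p.IsTrail) {f : Sym2 α} (hf : f ∈ p.edges) :
    (M.deleteEdges {f} ⊔ fromEdgeSet {s(x, y)}).Connected := by
  set M' := M.deleteEdges {f} ⊔ fromEdgeSet {s(x, y)} with hM'
  have hexy : M'.Adj x y := by
    rw [hM', sup_adj, fromEdgeSet_adj]
    exact Or.inr ⟨rfl, hxy⟩
  refine connected_of_forall_adj hM ?_
  intro u v huv
  by_cases hef : s(u, v) = f
  · subst hef
    rcases walk_split p hp hf with ⟨p₁, p₂, h₁, h₂⟩ | ⟨p₁, p₂, h₁, h₂⟩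
    · exact ((reach_mono_delete p₁ h₁).symm.trans hexy.reachable).trans
        (reach_mono_delete p₂ h₂).symm
    · exact (((reach_mono_delete p₁ h₁).symm.trans hexy.reachable).trans
        (reach_mono_delete p₂ h₂).symm).symm
  · exact Adj.reachable (by rw [hM', sup_adj]; exact Or.inl (by simp [deleteEdges_adj, huv, hef]))

lemma swap_connected_of_cut {M : SimpleGraph α} (hM : M.Connected) {a b : α}
    (hab : M.Adj a b) {x y : α} (hxy : x ≠ y)
    (hx : (M.deleteEdges {s(a, b)}).Reachable a x)
    (hy : (M.deleteEdges {s(a, b)}).Reachable b y) :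
    (M.deleteEdges {s(a, b)} ⊔ fromEdgeSet {s(x, y)}).Connected := by
  set M' := M.deleteEdges {s(a, b)} ⊔ fromEdgeSet {s(x, y)} with hM'
  have hexy : M'.Adj x y := by
    rw [hM', sup_adj, fromEdgeSet_adj]
    exact Or.inr ⟨rfl, hxy⟩
  have hkey : M'.Reachable a b :=
    ((Reachable.mono le_sup_left hx).trans hexy.reachable).trans
      (Reachable.mono le_sup_left hy).symm
  refine connected_of_forall_adj hM ?_
  intro u v huv
  by_cases hef : s(u, v) = s(a, b)
  · rcases Sym2.eq_iff.mp hef with ⟨rfl, rfl⟩ | ⟨rfl, rfl⟩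
    · exact hkey
    · exact hkey.symm
  · exact Adj.reachable (by rw [hM', sup_adj]; exact Or.inl (by simp [deleteEdges_adj, huv, hef]))

end AuxLemmas


section MSTLemmas
variable {α : Type*} [Finite α] {w : Sym2 α → ℝ}

/-- Cut bound: a tree edge is `w`-minimal across the cut it induces. -/
lemma mst_cut_bound {M : SimpleGraph α} (hM : IsMST (⊤ : SimpleGraph α) w M)
    {a b x y : α} (hab : M.Adj a b) (hxy : x ≠ y)
    (hx : (M.deleteEdges {s(a, b)}).Reachable a x)
    (hy : ¬ (M.deleteEdges {s(a, b)}).Reachable a y) :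
    w s(a, b) ≤ w s(x, y) := by
  by_cases hef : s(x, y) = s(a, b)
  · rw [hef]
  · have he : s(x, y) ∉ M.edgeSet := by
      intro hmem
      have : (M.deleteEdges {s(a, b)}).Adj x y := by
        simp [deleteEdges_adj, M.mem_edgeSet.mp hmem, hef]
      exact hy (hx.trans this.reachable)
    have hb : (M.deleteEdges {s(a, b)}).Reachable b y := by
      rcases tree_delete_sides hM.1.2.isConnected (a := a) (b := b) y with h | h
      · exact absurd h hy
      · exact h
    have hconn := swap_connected_of_cut hM.1.2.isConnected hab hxy hx hb
    have hfmem : s(a, b) ∈ M.edgeSet := M.mem_edgeSet.mpr hab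
    have hed : ¬ (s(x, y) : Sym2 α).IsDiag := by simp [hxy]
    have htree := swap_isTree hM.1.2 hfmem he hed hconn
    have hw := swap_totalWeight (M := M) w hfmem he hed
    have := hM.2 _ ⟨le_top, htree⟩
    rw [hw] at this
    linarith

/-- Path bound: a non-tree edge `w`-dominates every edge on the tree path. -/
lemma mst_path_bound {M : SimpleGraph α} (hM : IsMST (⊤ : SimpleGraph α) w M)
    {x y : α} (hxy : x ≠ y) (he : s(x, y) ∉ M.edgeSet)
    (p : M.Walk x y) (hp : p.IsTrail) {f : Sym2 α} (hf : f ∈ p.edges) :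
    w f ≤ w s(x, y) := by
  have hfmem : f ∈ M.edgeSet := p.edges_subset_edgeSet hf
  have hconn := swap_connected_of_path hM.1.2.isConnected hxy p hp hf
  have hed : ¬ (s(x, y) : Sym2 α).IsDiag := by simp [hxy]
  have htree := swap_isTree hM.1.2 hfmem he hed hconn
  have hw := swap_totalWeight (M := M) w hfmem he hed
  have := hM.2 _ ⟨le_top, htree⟩
  rw [hw] at this
  linarith

/-- If a non-tree edge of `M` lies in some MST, the tree path contains an edge of
equal weight. -/
lemma mst_exists_eq_weight {M Me : SimpleGraph α}
    (hM : IsMST (⊤ : SimpleGraph α) w M) (hMe : IsMST (⊤ : SimpleGraph α) w Me)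
    {x y : α} (hin : s(x, y) ∈ Me.edgeSet) (hout : s(x, y) ∉ M.edgeSet)
    (p : M.Walk x y) (hp : p.IsTrail) :
    ∃ f ∈ p.edges, w f = w s(x, y) := by
  have hadj : Me.Adj x y := Me.mem_edgeSet.mp hin
  have hxy : x ≠ y := hadj.ne
  have hnr : ¬ (Me.deleteEdges {s(x, y)}).Reachable x y :=
    tree_delete_not_reachable hMe.1.2 hadj
  obtain ⟨u, v, hmem, _, hru, hrv⟩ :=
    exists_cross (H := Me.deleteEdges {s(x, y)}) p (Reachable.refl x) hnr
  refine ⟨s(u, v), hmem, le_antisymm (mst_path_bound hM hxy hout p hp hmem) ?_⟩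
  have huv : u ≠ v := (M.mem_edgeSet.mp (p.edges_subset_edgeSet hmem)).ne
  exact mst_cut_bound hMe hadj huv hru hrv

/-- Two equal-weight MST edges at `v` go to different components of any graph whose
edges all have smaller weight. -/
lemma mst_distinct_components {M : SimpleGraph α}
    (hM : IsMST (⊤ : SimpleGraph α) w M) {v j k : α}
    (hj : M.Adj v j) (hk : M.Adj v k) (hjk : j ≠ k) (hw : w s(v, j) = w s(v, k))
    (K : SimpleGraph α) (hK : ∀ x y, K.Adj x y → w s(x, y) < w s(v, j)) :
    ¬ K.Reachable j k := by
  intro hreach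
  have hvj : v ≠ j := hj.ne
  have hkadj : (M.deleteEdges {s(j, v)}).Adj v k := by
    refine deleteEdges_adj.mpr ⟨hk, ?_⟩
    simp only [Set.mem_singleton_iff, Sym2.eq_iff]
    rintro (⟨rfl, rfl⟩ | ⟨-, rfl⟩)
    · exact hvj rfl
    · exact hjk rfl
  have hsw : ({s(j, v)} : Set (Sym2 α)) = {s(v, j)} := by rw [Sym2.eq_swap]
  have hnrj : ¬ (M.deleteEdges {s(j, v)}).Reachable j v := by
    rw [hsw]
    exact fun h => tree_delete_not_reachable hM.1.2 hj h.symm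
  have hnjk : ¬ (M.deleteEdges {s(j, v)}).Reachable j k := by
    intro h
    exact hnrj (h.trans hkadj.reachable.symm)
  obtain ⟨q⟩ := hreach
  obtain ⟨x, y, _, hxy, hrx, hry⟩ :=
    exists_cross (H := M.deleteEdges {s(j, v)}) q (Reachable.refl j) hnjk
  have := mst_cut_bound hM hj.symm hxy.ne hrx hry
  have hlt := hK x y hxy
  rw [Sym2.eq_swap] at this
  linarith

end MSTLemmas


section MainAbstract
variable {α : Type*} [Finite α]

/-- The eligible components of the strict threshold graph at level `t`. -/
def eligSet (w : Sym2 α → ℝ) (v : α) (t : ℝ) :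
    Set ((strictThresholdGraph (⊤ : SimpleGraph α) w t).ConnectedComponent) :=
  {C | ∃ j ∈ C.supp, (∃ M, IsMST (⊤ : SimpleGraph α) w M ∧ s(v, j) ∈ M.edgeSet) ∧
    w s(v, j) = t}

/-- The `Finset` of edge weights. -/
noncomputable def weightFinset (w : Sym2 α → ℝ) : Finset ℝ :=
  ((Set.toFinite ((⊤ : SimpleGraph α).edgeSet)).image w).toFinset

lemma mem_weightFinset {w : Sym2 α → ℝ} {v j : α} (h : v ≠ j) :
    w s(v, j) ∈ weightFinset w := by
  rw [weightFinset, Set.Finite.mem_toFinset]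
  exact ⟨s(v, j), by simpa using h, rfl⟩

noncomputable def eligFinset (w : Sym2 α → ℝ) (v : α) (t : ℝ) :
    Finset ((strictThresholdGraph (⊤ : SimpleGraph α) w t).ConnectedComponent) :=
  (Set.toFinite (eligSet w v t)).toFinset

lemma sum_elig_eq (w : Sym2 α → ℝ) (v : α) :
    ∑ t ∈ weightFinset w, (eligSet w v t).ncard =
      ((weightFinset w).sigma (eligFinset w v)).card := by
  rw [Finset.card_sigma]
  refine Finset.sum_congr rfl fun t _ => ?_
  rw [eligFinset, Set.ncard_eq_toFinset_card]

lemma upper_bound {w : Sym2 α → ℝ} {v : α} {M : SimpleGraph α}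
    (hM : IsMST (⊤ : SimpleGraph α) w M) :
    (M.neighborSet v).ncard ≤ ∑ t ∈ weightFinset w, (eligSet w v t).ncard := by
  classical
  rw [sum_elig_eq]
  rw [← Set.ncard_coe_finset]
  refine Set.ncard_le_ncard_of_injOn
    (fun j => ⟨w s(v, j),
      (strictThresholdGraph (⊤ : SimpleGraph α) w (w s(v, j))).connectedComponentMk j⟩)
    ?_ ?_ (Set.toFinite _)
  · intro j hj
    have hadj : M.Adj v j := hj
    simp only [Finset.coe_sigma, Set.mem_sigma_iff]
    refine ⟨mem_weightFinset hadj.ne, ?_⟩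
    rw [Finset.mem_coe, eligFinset, Set.Finite.mem_toFinset]
    exact ⟨j, rfl, ⟨M, hM, M.mem_edgeSet.mpr hadj⟩, rfl⟩
  · intro j hj k hk heq
    have hadjj : M.Adj v j := hj
    have hadjk : M.Adj v k := hk
    by_contra hjk
    have hw : w s(v, j) = w s(v, k) := congrArg Sigma.fst heq
    have hcomp := (Sigma.mk.inj_iff.mp heq).2
    rw [← hw] at hcomp
    have hcomp' := eq_of_heq hcomp
    have hreach := SimpleGraph.ConnectedComponent.exact hcomp'
    exact mst_distinct_components hM hadjj hadjk hjk hw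
      (strictThresholdGraph (⊤ : SimpleGraph α) w (w s(v, j)))
      (fun x y hxy => hxy.2) hreach

end MainAbstract

section LowerBound
variable {α : Type*} [Finite α]

omit [Finite α] in
lemma path_first_edge {G : SimpleGraph α} {v u j : α} (p : G.Walk v j) (hp : p.IsPath)
    (h : s(v, u) ∈ p.edges) :
    ∃ (hadj : G.Adj v u) (q : G.Walk u j), p = SimpleGraph.Walk.cons hadj q := by
  cases p with
  | nil => simp at h
  | @cons _ c _ ha q =>
    rw [Walk.edges_cons] at h
    rcases List.mem_cons.mp h with heq | hmem
    · rcases Sym2.eq_iff.mp heq with ⟨-, rfl⟩ | ⟨rfl, rfl⟩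
      · exact ⟨ha, q, rfl⟩
      · exact absurd ha G.irrefl
    · exact absurd (Walk.fst_mem_support_of_mem_edges q hmem)
        ((Walk.cons_isPath_iff ha q).mp hp).2

open Classical in
lemma lower_bound [Nonempty α] (w : Sym2 α → ℝ) (v : α) :
    ∃ M, IsMST (⊤ : SimpleGraph α) w M ∧
      ∑ t ∈ weightFinset w, (eligSet w v t).ncard ≤ (M.neighborSet v).ncard := by
  have hch : ∀ (t : ℝ)
      (C : (strictThresholdGraph (⊤ : SimpleGraph α) w t).ConnectedComponent),
      C ∈ eligSet w v t → ∃ j, j ∈ C.supp ∧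
        (∃ M, IsMST (⊤ : SimpleGraph α) w M ∧ s(v, j) ∈ M.edgeSet) ∧ w s(v, j) = t :=
    fun t C hC => hC
  choose js hsupp hg hwt using hch
  set Sg := (weightFinset w).sigma (eligFinset w v) with hSg
  have hmem' : ∀ p ∈ Sg, p.2 ∈ eligSet w v p.1 := by
    intro p hp
    rw [hSg, Finset.mem_sigma] at hp
    exact (Set.Finite.mem_toFinset _).mp hp.2
  set ψ : (Σ t : ℝ, (strictThresholdGraph (⊤ : SimpleGraph α) w t).ConnectedComponent) → α :=
    fun p => if h : p.2 ∈ eligSet w v p.1 then js p.1 p.2 h else v with hψdef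
  have hψ : ∀ p ∈ Sg, ψ p ∈ p.2.supp ∧
      (∃ M, IsMST (⊤ : SimpleGraph α) w M ∧ s(v, ψ p) ∈ M.edgeSet) ∧ w s(v, ψ p) = p.1 := by
    intro p hp
    have h := hmem' p hp
    rw [hψdef]
    simp only [dif_pos h]
    exact ⟨hsupp _ _ h, hg _ _ h, hwt _ _ h⟩
  have hinj : Set.InjOn ψ ↑Sg := by
    rintro ⟨t1, C1⟩ hp ⟨t2, C2⟩ hq heq
    obtain ⟨hs1, -, hw1⟩ := hψ _ (Finset.mem_coe.mp hp)
    obtain ⟨hs2, -, hw2⟩ := hψ _ (Finset.mem_coe.mp hq)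
    dsimp only at hs1 hs2 hw1 hw2
    have ht : t1 = t2 := by rw [← hw1, heq, hw2]
    subst ht
    rw [heq] at hs1
    have h1 := (C1.mem_supp_iff _).mp hs1
    have h2 := (C2.mem_supp_iff _).mp hs2
    have hC : C1 = C2 := h1.symm.trans h2
    subst hC
    rfl
  set Jset : Set α := ψ '' ↑Sg with hJset
  have hJcard : Jset.ncard = ∑ t ∈ weightFinset w, (eligSet w v t).ncard := by
    rw [sum_elig_eq, hJset, Set.ncard_image_of_injOn hinj, Set.ncard_coe_finset]
  obtain ⟨M, hM, hmax⟩ := exists_max_mst w (fun X => ((X.neighborSet v) ∩ Jset).ncard)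
    (exists_mst w)
  refine ⟨M, hM, ?_⟩
  have hclaim : Jset ⊆ M.neighborSet v := by
    intro j0 hj0
    obtain ⟨⟨t, C⟩, hpS, hpj⟩ := hj0
    obtain ⟨hjsupp, ⟨Me, hMe, hein⟩, hwte⟩ := hψ _ (Finset.mem_coe.mp hpS)
    dsimp only at hjsupp hwte
    rw [hpj] at hjsupp hein hwte
    by_contra hnadj
    have hvj : v ≠ j0 := (Me.mem_edgeSet.mp hein).ne
    have he_out : s(v, j0) ∉ M.edgeSet := fun h => hnadj (M.mem_edgeSet.mp h)
    obtain ⟨p0, hp0⟩ := (hM.1.2.existsUnique_path v j0).exists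
    obtain ⟨f0, hf0mem, hf0w⟩ := mst_exists_eq_weight hM hMe hein he_out p0 hp0.isTrail
    rw [hwte] at hf0w
    by_cases hcase : ∃ f ∈ p0.edges, w f = t ∧ ∀ x ∈ Jset, f ≠ s(v, x)
    · obtain ⟨f, hf, hwf, hnotJ⟩ := hcase
      have hfM : f ∈ M.edgeSet := p0.edges_subset_edgeSet hf
      have hed : ¬ (s(v, j0) : Sym2 α).IsDiag := by simp [hvj]
      have hconn := swap_connected_of_path hM.1.2.isConnected hvj p0 hp0.isTrail hf
      have htree := swap_isTree hM.1.2 hfM he_out hed hconn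
      set M' := M.deleteEdges {f} ⊔ fromEdgeSet {s(v, j0)} with hM'def
      have hw' : totalWeight M' w = totalWeight M w := by
        rw [hM'def, swap_totalWeight w hfM he_out hed, hwf, hwte]
        ring
      have hM'mst : IsMST (⊤ : SimpleGraph α) w M' := by
        refine ⟨⟨le_top, htree⟩, fun M'' h'' => ?_⟩
        rw [hw']
        exact hM.2 M'' h''
      have hssub : (M.neighborSet v ∩ Jset) ⊂ (M'.neighborSet v ∩ Jset) := by
        constructor
        · rintro x ⟨hx1, hx2⟩
          refine ⟨?_, hx2⟩
          have hadjx : M.Adj v x := hx1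
          have : M'.Adj v x := by
            rw [hM'def, sup_adj]
            exact Or.inl (deleteEdges_adj.mpr ⟨hadjx,
              by simpa using (hnotJ x hx2).symm⟩)
          exact this
        · intro hsub
          have hj0mem : j0 ∈ M'.neighborSet v ∩ Jset := by
            refine ⟨?_, ⟨⟨t, C⟩, hpS, hpj⟩⟩
            show M'.Adj v j0
            rw [hM'def, sup_adj, fromEdgeSet_adj]
            exact Or.inr ⟨rfl, hvj⟩
          have := hsub hj0mem
          exact hnadj this.1
      have hlt := Set.ncard_lt_ncard hssub (Set.toFinite _)
      exact absurd (hmax M' hM'mst) (by omega)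
    · push_neg at hcase
      obtain ⟨u, huJ, hf0eq⟩ := hcase f0 hf0mem hf0w
      subst hf0eq
      obtain ⟨hadj0, q, hpq⟩ := path_first_edge p0 hp0 hf0mem
      have hqpath : q.IsPath ∧ v ∉ q.support := by
        have := hp0
        rw [hpq, Walk.cons_isPath_iff] at this
        exact this
      have hedges : ∀ e' ∈ q.edges,
          e' ∈ (strictThresholdGraph (⊤ : SimpleGraph α) w t).edgeSet := by
        intro e' he'
        have hin_p : e' ∈ p0.edges := by
          rw [hpq, Walk.edges_cons]
          exact List.mem_cons_of_mem _ he'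
        have hle : w e' ≤ t := by
          have := mst_path_bound hM hvj he_out p0 hp0.isTrail hin_p
          rwa [hwte] at this
        have hlt : w e' < t := by
          rcases lt_or_eq_of_le hle with h | h
          · exact h
          · obtain ⟨x, hxJ, hex⟩ := hcase e' hin_p h
            rw [hex] at he'
            exact absurd (Walk.fst_mem_support_of_mem_edges q he') hqpath.2
        have heM : e' ∈ M.edgeSet := q.edges_subset_edgeSet he'
        revert hlt heM
        induction e' using Sym2.ind with
        | _ x y =>
          intro hlt heM
          rw [mem_edgeSet]
          exact (⟨by simpa using (M.mem_edgeSet.mp heM).ne, hlt⟩ :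
            (⊤ : SimpleGraph α).Adj x y ∧ w s(x, y) < t)
      have hreach : (strictThresholdGraph (⊤ : SimpleGraph α) w t).Reachable u j0 :=
        ⟨q.transfer _ hedges⟩
      have hmkuj : (strictThresholdGraph (⊤ : SimpleGraph α) w t).connectedComponentMk u
          = C := by
        rw [ConnectedComponent.sound hreach]
        exact (ConnectedComponent.mem_supp_iff _ _).mp hjsupp
      obtain ⟨r, hrS, hru⟩ := huJ
      obtain ⟨hrsupp, -, hrwt⟩ := hψ r (Finset.mem_coe.mp hrS)
      rw [hru] at hrsupp hrwt
      rcases r with ⟨t', C'⟩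
      dsimp only at hrsupp hrwt
      have hrt : t' = t := by rw [← hrwt, hf0w]
      subst hrt
      have hC : C' = C := by
        have h1 := (C'.mem_supp_iff u).mp hrsupp
        rw [← h1, ← hmkuj]
      subst hC
      rw [hpj] at hru
      rw [← hru] at hf0mem
      exact he_out (p0.edges_subset_edgeSet hf0mem)
  calc ∑ t ∈ weightFinset w, (eligSet w v t).ncard = Jset.ncard := hJcard.symm
    _ ≤ (M.neighborSet v).ncard := Set.ncard_le_ncard hclaim (Set.toFinite _)

end LowerBound

lemma main_abstract {α : Type*} [Finite α] [Nonempty α] (w : Sym2 α → ℝ) (v : α) :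
    sSup {d : ℕ | ∃ M : SimpleGraph α,
        IsMST (⊤ : SimpleGraph α) w M ∧ d = (M.neighborSet v).ncard} =
      ∑ t ∈ weightFinset w, (eligSet w v t).ncard := by
  obtain ⟨M0, hM0, hge⟩ := lower_bound w v
  have hub : ∀ d ∈ {d : ℕ | ∃ M : SimpleGraph α,
      IsMST (⊤ : SimpleGraph α) w M ∧ d = (M.neighborSet v).ncard},
      d ≤ ∑ t ∈ weightFinset w, (eligSet w v t).ncard := by
    rintro d ⟨M, hM, rfl⟩
    exact upper_bound hM
  apply le_antisymm
  · exact csSup_le ⟨_, ⟨M0, hM0, rfl⟩⟩ hub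
  · exact le_csSup ⟨_, hub⟩ ⟨M0, hM0, le_antisymm hge (upper_bound hM0)⟩

/-- `δ_max(v)` equals the sum, over the edge-weight values `t` of the
distance graph, of the number of components of the strict threshold graph `G_{<t}`
containing a vertex joined to `v` by an edge of `g` of weight exactly `t`. -/
theorem deltaMax_eq_sum_components {V : Type*} [Finite V] (P : PhyloTree V)
    (v : ↥P.L) :
    P.deltaMax v =
      ∑ t ∈ ((Set.toFinite ((⊤ : SimpleGraph ↥P.L).edgeSet)).image P.wG).toFinset,
        {C : (strictThresholdGraph (⊤ : SimpleGraph ↥P.L) P.wG t).ConnectedComponent |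
          ∃ j ∈ C.supp, P.mstEdge s(v, j) ∧ P.wG s(v, j) = t}.ncard := by
  haveI : Nonempty ↥P.L := P.L_nonempty.to_subtype
  exact main_abstract P.wG v
end
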